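/- For a totally real section span{x,y} ⊂ M orthogonal to ξ (i.e. η(x) = η(y) = 0, g(x,φx) = g(y,φy) = g(x,φy) = 0) that is nondegenerate, the induced sectional curvature of R = ν'[π₁ - π₂ - tan t·π₅] + ν̃'[π₃ - tan t·π₄] - π₁(A·, A·, ·, ·) satisfies k(x,y) = R(x,y,y,x)/π₁(x,y,y,x) = ν' - π₁(Ax,Ay,y,x)/π₁(x,y,y,x). -/

import Mathlib

open Real

def pi1 {V : Type*} (g : V → V → ℝ) (x y z u : V) : ℝ :=
  g y z * g x u - g x z * g y u
def pi2 {V : Type*} (g : V → V → ℝ) (φ : V → V) (x y z u : V) : ℝ :=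
  g y (φ z) * g x (φ u) - g x (φ z) * g y (φ u)
def pi3 {V : Type*} (g : V → V → ℝ) (φ : V → V) (x y z u : V) : ℝ :=
  -(g y z * g x (φ u)) + g x z * g y (φ u) - g y (φ z) * g x u + g x (φ z) * g y u
def pi4 {V : Type*} (g : V → V → ℝ) (η : V → ℝ) (x y z u : V) : ℝ :=
  η y * η z * g x u - η x * η z * g y u + η x * η u * g y z - η y * η u * g x z
def pi5 {V : Type*} (g : V → V → ℝ) (φ : V → V) (η : V → ℝ) (x y z u : V) : ℝ :=
  η y * η z * g x (φ u) - η x * η z * g y (φ u) + η x * η u * g y (φ z) - η y * η u * g x (φ z)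

/-- for a nondegenerate totally real section orthogonal to ξ,
k(x,y) = ν' - π₁(Ax,Ay,y,x)/π₁(x,y,y,x). -/
theorem stmt_17 {V : Type*} [AddCommGroup V] [Module ℝ V]
    (φ : V →ₗ[ℝ] V) (ξ : V) (η : V →ₗ[ℝ] ℝ) (g : V →ₗ[ℝ] V →ₗ[ℝ] ℝ)
    (hφ : ∀ X, φ (φ X) = -X + η X • ξ)
    (hηξ : η ξ = 1)
    (hsym : ∀ X Y, g X Y = g Y X)
    (hg : ∀ X Y, g (φ X) (φ Y) = -g X Y + η X * η Y)
    (A : V →ₗ[ℝ] V)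
    (hAsym : ∀ x y, g (A x) y = g x (A y))
    (t ν' νt : ℝ)
    (R : V → V → V → V → ℝ)
    (hR : ∀ x y z u, R x y z u
      = ν' * (pi1 (fun a b => g a b) x y z u
            - pi2 (fun a b => g a b) (fun a => φ a) x y z u
            - tan t * pi5 (fun a b => g a b) (fun a => φ a) (fun a => η a) x y z u)
      + νt * (pi3 (fun a b => g a b) (fun a => φ a) x y z u
            - tan t * pi4 (fun a b => g a b) (fun a => η a) x y z u)
      - pi1 (fun a b => g a b) (A x) (A y) z u)
    (x y : V)
    (hηx : η x = 0) (hηy : η y = 0)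
    (hxx : g x (φ x) = 0) (hyy : g y (φ y) = 0) (hxy : g x (φ y) = 0)
    (hnd : pi1 (fun a b => g a b) x y y x ≠ 0) :
    R x y y x / pi1 (fun a b => g a b) x y y x
      = ν' - pi1 (fun a b => g a b) (A x) (A y) y x
              / pi1 (fun a b => g a b) x y y x := by
  have hyx : g y (φ x) = 0 := by
    have h1 := hg (φ x) y
    rw [hφ x, hηx, hηy] at h1
    simp [hxy] at h1
    linarith [h1, hsym (φ x) y]
  have hR1 := hR x y y x
  simp only [pi1] at hnd
  simp only [pi1, pi2, pi3, pi4, pi5, hηx, hηy, hxx, hyy, hxy, hyx] at hR1 ⊢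
  rw [hR1]
  field_simp
  ring
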